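/- arXiv:1311.7357 — 3 statements merged into one kernel-verified Lean document; each statement's English description precedes it below -/
import Mathlib

section
/- For every initial list and every request sequence σ, under the full cost model, MTFO(σ) + MTFE(σ) ≤ 4·OPT(σ). -/
namespace ListUpdate

variable {α : Type} [DecidableEq α]

/-- Swap the adjacent items at (0-based) positions `i` and `i+1`. -/
def adjSwap (L : List α) (i : ℕ) : List α :=
  L.take i ++ (match L.drop i with
    | a :: b :: t => b :: a :: t
    | t => t)

/-- An offline action for one request: a sequence of paid exchanges performed
before the access (each given by the position of the swapped pair), and the
target position for the free exchange performed after the access. -/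
structure Action (α : Type) where
  paid : List ℕ
  target : ℕ

def doPaid (L : List α) (ps : List ℕ) : List α := ps.foldl adjSwap L

/-- Move item `r` (for free) to position `min j (current position)`,
i.e. to any position not farther from the front. -/
def freeMove (L : List α) (r : α) (j : ℕ) : List α :=
  (L.erase r).insertIdx (min j (L.idxOf r)) r

/-- Cost of one offline step: one unit per paid exchange plus the access cost;
`c = 1` gives the full cost model, `c = 0` the partial cost model. -/
def stepCost (c : ℕ) (L : List α) (r : α) (a : Action α) : ℕ :=
  a.paid.length + ((doPaid L a.paid).idxOf r + c)

def stepList (L : List α) (r : α) (a : Action α) : List α :=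
  freeMove (doPaid L a.paid) r a.target

/-- Total cost of serving the request sequence with the given actions. -/
def serveCost (c : ℕ) : List α → List α → List (Action α) → ℕ
  | _, [], _ => 0
  | _, _ :: _, [] => 0
  | L, r :: σ, a :: as => stepCost c L r a + serveCost c (stepList L r a) σ as

/-- The list configuration after serving the requests with the given actions. -/
def serveList : List α → List α → List (Action α) → List α
  | L, [], _ => L
  | L, _ :: _, [] => L
  | L, r :: σ, a :: as => serveList (stepList L r a) σ as

/-- `optCost c L σ` : the optimal offline cost of serving `σ` starting from list `L`. -/
noncomputable def optCost (c : ℕ) (L : List α) (σ : List α) : ℕ :=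
  sInf { n | ∃ as : List (Action α), as.length = σ.length ∧ serveCost c L σ as = n }

/-- Cost of an MTF2 (move-to-front-every-other-access) algorithm: it keeps one bit
per item; on each request the requested item's bit is flipped and the item is moved
to the front exactly when the bit becomes `false` (i.e. 0). -/
def mtf2Cost (c : ℕ) : (α → Bool) → List α → List α → ℕ
  | _, _, [] => 0
  | bits, L, r :: σ =>
    (L.idxOf r + c) +
      mtf2Cost c (Function.update bits r (!bits r))
        (if !bits r then L else r :: L.erase r) σ

/-- Final list of an MTF2 algorithm. -/
def mtf2List : (α → Bool) → List α → List α → List α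
  | _, L, [] => L
  | bits, L, r :: σ =>
      mtf2List (Function.update bits r (!bits r))
        (if !bits r then L else r :: L.erase r) σ

/-- MTFO moves the requested item to the front on every odd request to it:
this is MTF2 with all bits initially 1. -/
def mtfoCost (c : ℕ) (L σ : List α) : ℕ := mtf2Cost c (fun _ => true) L σ

/-- MTFE moves the requested item to the front on every even request to it:
this is MTF2 with all bits initially 0. -/
def mtfeCost (c : ℕ) (L σ : List α) : ℕ := mtf2Cost c (fun _ => false) L σ

/-- One step of TS (Timestamp). `h` is the list of previous requests, most recent
first. The requested item `x` is inserted in front of the first item of the list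
that precedes `x` and was requested at most once since the last request to `x`;
if there is no such item, or this is the first request to `x`, nothing moves. -/
def tsStep (h : List α) (L : List α) (x : α) : List α :=
  if x ∈ h then
    let cnt : α → ℕ := fun z => (h.takeWhile (fun w => decide (w ≠ x))).count z
    let pre := L.takeWhile (fun w => decide (w ≠ x))
    let keep := pre.takeWhile (fun z => decide (2 ≤ cnt z))
    keep ++ x :: (pre.drop keep.length ++ (L.dropWhile (fun w => decide (w ≠ x))).tail)
  else L

/-- Cost of TS; `h` is the history of previous requests, most recent first
(initially `[]`). -/
def tsCost (c : ℕ) : List α → List α → List α → ℕ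
  | _, _, [] => 0
  | h, L, r :: σ => (L.idxOf r + c) + tsCost c (r :: h) (tsStep h L r) σ

/-- An online algorithm with advice: its action may depend on the advice tape and
on the sequence of requests seen so far (ending with the current request). -/
def OnlineAdviceAlg (α : Type) := (ℕ → Bool) → List α → Action α

/-- Total cost of running the online algorithm `A` with advice tape `φ`:
`past` is the reversed-free list of requests served so far (oldest first). -/
def runAdvCost (c : ℕ) (A : OnlineAdviceAlg α) (φ : ℕ → Bool) :
    List α → List α → List α → ℕ
  | _, _, [] => 0
  | past, L, r :: σ =>
      stepCost c L r (A φ (past ++ [r])) +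
        runAdvCost c A φ (past ++ [r]) (stepList L r (A φ (past ++ [r]))) σ

/-- `A`, run on `σ` with tape `φ`, reads at most the first `k` bits of advice:
its behaviour on every step of `σ` is unchanged if the tape is modified
beyond position `k`. -/
def UsesAdvice (A : OnlineAdviceAlg α) (φ : ℕ → Bool) (σ : List α) (k : ℕ) : Prop :=
  ∀ ψ : ℕ → Bool, (∀ i < k, ψ i = φ i) →
    ∀ t, 0 < t → t ≤ σ.length → A ψ (σ.take t) = A φ (σ.take t)

set_option linter.unusedSectionVars false
set_option linter.unusedVariables false

lemma eraseIdx_eq_take_drop' (l : List α) (i : ℕ) : l.eraseIdx i = l.take i ++ l.drop (i+1) := by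
  induction l generalizing i with
  | nil => simp
  | cons a t ih => cases i <;> simp [ih]

lemma insertIdx_eq_take_drop' (l : List α) (n : ℕ) (a : α) (h : n ≤ l.length) :
    l.insertIdx n a = l.take n ++ a :: l.drop n := by
  induction l generalizing n with
  | nil => simp at h; simp [h]
  | cons b t ih => cases n with
    | zero => simp
    | succ m => simp at h; simp [List.insertIdx_succ_cons, ih m h]

lemma indexOf_getElem' {M : List α} (h : M.Nodup) {i : ℕ} (hi : i < M.length) :
    M.idxOf M[i] = i := by
  have hm : M[i] ∈ M := List.getElem_mem hi
  have hlt : M.idxOf M[i] < M.length := List.idxOf_lt_length_iff.2 hm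
  exact (List.Nodup.getElem_inj_iff h).1 (List.getElem_idxOf hlt)

/-- In a nodup list, indexOf is strictly increasing along the list. -/
lemma pairwise_indexOf (M : List α) (h : M.Nodup) :
    M.Pairwise (fun a b => M.idxOf a < M.idxOf b) := by
  rw [List.pairwise_iff_getElem]
  intro i j hi hj hij
  rw [indexOf_getElem' h hi, indexOf_getElem' h hj]
  exact hij

/-- A sublist of a nodup list preserves relative order. -/
lemma sublist_bef {M' M : List α} (hs : M'.Sublist M) (hM : M.Nodup) {x y : α}
    (hy : y ∈ M') (hx : x ∈ M') :
    (M'.idxOf y < M'.idxOf x ↔ M.idxOf y < M.idxOf x) := by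
  have hM' : M'.Nodup := hM.sublist hs
  have key : ∀ {u v : α}, u ∈ M' → v ∈ M' → M'.idxOf u < M'.idxOf v →
      M.idxOf u < M.idxOf v := by
    intro u v hu hv huv
    have hP : M'.Pairwise (fun a b => M.idxOf a < M.idxOf b) :=
      (pairwise_indexOf M hM).sublist hs
    have hu' := List.idxOf_lt_length_iff.2 hu
    have hv' := List.idxOf_lt_length_iff.2 hv
    have := List.pairwise_iff_getElem.1 hP _ _ hu' hv' huv
    rwa [List.getElem_idxOf hu', List.getElem_idxOf hv'] at this
  constructor
  · exact key hy hx
  · intro h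
    rcases lt_trichotomy (M'.idxOf y) (M'.idxOf x) with h1 | h1 | h1
    · exact h1
    · exact absurd ((List.idxOf_inj (y := x) hy).1 h1 ▸ rfl : M.idxOf y = M.idxOf y)
        (by rw [(List.idxOf_inj (y := x) hy).1 h1] at h; omega)
    · exact absurd (key hx hy h1) (by omega)

lemma mem_take_iff {M : List α} (hM : M.Nodup) {x : α} {n : ℕ} :
    x ∈ M.take n ↔ x ∈ M ∧ M.idxOf x < n := by
  constructor
  · intro hx
    have hxM : x ∈ M := List.mem_of_mem_take hx
    refine ⟨hxM, ?_⟩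
    have : M.idxOf x = (M.take n).idxOf x := by
      conv_lhs => rw [← List.take_append_drop n M]
      rw [List.idxOf_append_of_mem hx]
    rw [this]
    calc (M.take n).idxOf x < (M.take n).length := List.idxOf_lt_length_iff.2 hx
      _ ≤ n := by simp [List.length_take]
  · rintro ⟨hxM, hn⟩
    have hlt : M.idxOf x < M.length := List.idxOf_lt_length_iff.2 hxM
    have hlt2 : M.idxOf x < (M.take n).length := by simp [List.length_take]; omega
    have : (M.take n)[M.idxOf x] = x := by
      rw [List.getElem_take]; exact List.getElem_idxOf hlt
    rw [← this]; exact List.getElem_mem hlt2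


/-- The set of "inversions against x": items before x in M but after x in N. -/
def invSet (G : Finset α) (M N : List α) (x : α) : Finset α :=
  G.filter (fun y => M.idxOf y < M.idxOf x ∧ N.idxOf x < N.idxOf y)

/-- Weighted inversion potential. -/
def pot (G : Finset α) (w : α → ℕ) (M N : List α) : ℕ :=
  ∑ x ∈ G, w x * (invSet G M N x).card

lemma indexOf_eq_card {G : Finset α} {M : List α} (hM : M.Nodup)
    (hmem : ∀ x, x ∈ M ↔ x ∈ G) {r : α} (hr : r ∈ M) :
    M.idxOf r = (G.filter (fun y => M.idxOf y < M.idxOf r)).card := by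
  have h1 : G.filter (fun y => M.idxOf y < M.idxOf r) = (M.take (M.idxOf r)).toFinset := by
    ext y
    simp only [Finset.mem_filter, List.mem_toFinset, mem_take_iff hM, ← hmem y]
    try tauto
  rw [h1, List.toFinset_card_of_nodup (hM.sublist (List.take_sublist _ _))]
  have := List.idxOf_lt_length_iff.2 hr
  simp [List.length_take]; omega

lemma bef_trichotomy {M : List α} (hM : M.Nodup) {x y : α} (hx : x ∈ M) (hy : y ∈ M)
    (hne : x ≠ y) : M.idxOf x < M.idxOf y ∨ M.idxOf y < M.idxOf x := by
  rcases lt_trichotomy (M.idxOf x) (M.idxOf y) with h | h | h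
  · exact Or.inl h
  · exact absurd ((List.idxOf_inj (y := y) hx).1 h) hne
  · exact Or.inr h

lemma pot_self (G : Finset α) (w : α → ℕ) (M : List α) : pot G w M M = 0 := by
  unfold pot invSet
  refine Finset.sum_eq_zero fun x _ => ?_
  convert Nat.mul_zero (w x)
  rw [Finset.card_eq_zero]
  ext y; simp only [Finset.mem_filter, Finset.notMem_empty, iff_false]
  rintro ⟨-, h1, h2⟩; omega


lemma adjSwap_perm (N : List α) (i : ℕ) : (adjSwap N i).Perm N := by
  rcases hd : N.drop i with - | ⟨a, - | ⟨b, t⟩⟩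
  · simp only [adjSwap, hd]
    conv_rhs => rw [← List.take_append_drop i N, hd]
  · simp only [adjSwap, hd]
    conv_rhs => rw [← List.take_append_drop i N, hd]
  · simp only [adjSwap, hd]
    conv_rhs => rw [← List.take_append_drop i N, hd]
    exact (List.Perm.swap a b t).append_left _

/-- Per-element index description in a swapped list. -/
lemma swap_indexOf {T t : List α} {a b : α} (hN : (T ++ a :: b :: t).Nodup) {z : α}
    (hz : z ∈ T ++ a :: b :: t) :
    (z = a ∧ (T ++ a :: b :: t).idxOf z = T.length ∧
        (T ++ b :: a :: t).idxOf z = T.length + 1) ∨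
    (z = b ∧ (T ++ a :: b :: t).idxOf z = T.length + 1 ∧
        (T ++ b :: a :: t).idxOf z = T.length) ∨
    (z ≠ a ∧ z ≠ b ∧ (T ++ b :: a :: t).idxOf z = (T ++ a :: b :: t).idxOf z) := by
  have hd := List.disjoint_of_nodup_append hN
  have hna : a ∉ T := fun h => hd h (by simp)
  have hnb : b ∉ T := fun h => hd h (by simp)
  have htail : (a :: b :: t).Nodup := (List.nodup_append.1 hN).2.1
  have hab : a ≠ b := by simp at htail; tauto
  have hat : a ∉ t := by simp at htail; tauto
  have hbt : b ∉ t := by simp at htail; tauto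
  by_cases hza : z = a
  · subst hza
    left
    refine ⟨rfl, ?_, ?_⟩
    · rw [List.idxOf_append_of_notMem hna, List.idxOf_cons_self]
      omega
    · rw [List.idxOf_append_of_notMem hna, List.idxOf_cons_ne _ (Ne.symm hab),
        List.idxOf_cons_self]
  by_cases hzb : z = b
  · subst hzb
    right; left
    refine ⟨rfl, ?_, ?_⟩
    · rw [List.idxOf_append_of_notMem hnb, List.idxOf_cons_ne _ hab,
        List.idxOf_cons_self]
    · rw [List.idxOf_append_of_notMem hnb, List.idxOf_cons_self]
      omega
  right; right
  refine ⟨hza, hzb, ?_⟩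
  rcases List.mem_append.1 hz with hzT | hzr
  · rw [List.idxOf_append_of_mem hzT, List.idxOf_append_of_mem hzT]
  · have hzt : z ∈ t := by
      simp only [List.mem_cons] at hzr; tauto
    have hz1 : z ∉ T := fun h => hd h hzr
    rw [List.idxOf_append_of_notMem hz1, List.idxOf_append_of_notMem hz1,
      List.idxOf_cons_ne _ (fun h => hza h.symm), List.idxOf_cons_ne _ (fun h => hzb h.symm),
      List.idxOf_cons_ne _ (fun h => hzb h.symm), List.idxOf_cons_ne _ (fun h => hza h.symm)]

/-- The only pair whose relative order changes when swapping `a` and `b`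
(with `a` originally first) is the pair `(b, a)`. -/
lemma swap_discordant {T t : List α} {a b : α} (hN : (T ++ a :: b :: t).Nodup) {x y : α}
    (hx : x ∈ T ++ a :: b :: t) (hy : y ∈ T ++ a :: b :: t)
    (h' : (T ++ b :: a :: t).idxOf x < (T ++ b :: a :: t).idxOf y)
    (h : ¬ (T ++ a :: b :: t).idxOf x < (T ++ a :: b :: t).idxOf y) :
    x = b ∧ y = a := by
  have ha : a ∈ T ++ a :: b :: t := by simp
  have hb : b ∈ T ++ a :: b :: t := by simp
  have hab : a ≠ b := by
    have htail : (a :: b :: t).Nodup := (List.nodup_append.1 hN).2.1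
    simp at htail; tauto
  have hia : (T ++ a :: b :: t).idxOf a = T.length := by
    rcases swap_indexOf hN ha with ⟨-, e, -⟩ | ⟨e, -, -⟩ | ⟨e, -, -⟩
    · exact e
    · exact absurd e hab
    · exact absurd rfl e
  have hib : (T ++ a :: b :: t).idxOf b = T.length + 1 := by
    rcases swap_indexOf hN hb with ⟨e, -, -⟩ | ⟨-, e, -⟩ | ⟨-, e, -⟩
    · exact absurd e.symm hab
    · exact e
    · exact absurd rfl e
  rcases swap_indexOf hN hx with ⟨hxa, e1, e2⟩ | ⟨hxb, e1, e2⟩ | ⟨hxa, hxb, e2⟩ <;>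
    rcases swap_indexOf hN hy with ⟨hya, f1, f2⟩ | ⟨hyb, f1, f2⟩ | ⟨hya, hyb, f2⟩
  · omega
  · omega
  · -- x = a, y generic
    exfalso
    have : (T ++ a :: b :: t).idxOf y = (T ++ a :: b :: t).idxOf a := by omega
    exact hya ((List.idxOf_inj (y := a) hy).1 this)
  · subst hxb; subst hya; exact ⟨rfl, rfl⟩
  · omega
  · -- x = b, y generic
    exfalso
    have : (T ++ a :: b :: t).idxOf y = (T ++ a :: b :: t).idxOf b := by omega
    exact hyb ((List.idxOf_inj (y := b) hy).1 this)
  · -- x generic, y = a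
    exfalso
    have : (T ++ a :: b :: t).idxOf x = (T ++ a :: b :: t).idxOf a := by omega
    exact hxa ((List.idxOf_inj (y := a) hx).1 this)
  · -- x generic, y = b
    exfalso
    have : (T ++ a :: b :: t).idxOf x = (T ++ a :: b :: t).idxOf b := by omega
    exact hxb ((List.idxOf_inj (y := b) hx).1 this)
  · omega


lemma pot_adjSwap {G : Finset α} {w : α → ℕ} {M N : List α} (i : ℕ) (hN : N.Nodup)
    (hmem : ∀ x, x ∈ N ↔ x ∈ G) (hw : ∀ x, w x ≤ 2) :
    pot G w M (adjSwap N i) ≤ pot G w M N + 2 := by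
  rcases hd : N.drop i with - | ⟨a, - | ⟨b, t⟩⟩
  · have he : adjSwap N i = N := by
      simp only [adjSwap, hd]
      conv_rhs => rw [← List.take_append_drop i N, hd]
    rw [he]; omega
  · have he : adjSwap N i = N := by
      simp only [adjSwap, hd]
      conv_rhs => rw [← List.take_append_drop i N, hd]
    rw [he]; omega
  · have hNeq : N = N.take i ++ a :: b :: t := by
      conv_lhs => rw [← List.take_append_drop i N, hd]
    have hswap : adjSwap N i = N.take i ++ b :: a :: t := by simp only [adjSwap, hd]
    have hNd : (N.take i ++ a :: b :: t).Nodup := hNeq ▸ hN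
    have hbN : b ∈ N := by rw [hNeq]; simp
    have hbG : b ∈ G := (hmem b).1 hbN
    have hsub : ∀ x ∈ G, x ≠ b → invSet G M (adjSwap N i) x ⊆ invSet G M N x := by
      intro x hxG hxb y hy
      simp only [invSet, Finset.mem_filter, hswap] at hy
      obtain ⟨hyG, hMyx, hNxy⟩ := hy
      simp only [invSet, Finset.mem_filter]
      refine ⟨hyG, hMyx, ?_⟩
      by_contra hcon
      have hxN : x ∈ N := (hmem x).2 hxG
      have hyN : y ∈ N := (hmem y).2 hyG
      rw [hNeq] at hcon hxN hyN
      exact hxb (swap_discordant hNd hxN hyN hNxy hcon).1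
    have hsubb : invSet G M (adjSwap N i) b ⊆ invSet G M N b ∪ {a} := by
      intro y hy
      simp only [invSet, Finset.mem_filter, hswap] at hy
      obtain ⟨hyG, hMyx, hNxy⟩ := hy
      by_cases hcon : N.idxOf b < N.idxOf y
      · exact Finset.mem_union_left _ (by simp only [invSet, Finset.mem_filter]; tauto)
      · have hyN : y ∈ N := (hmem y).2 hyG
        rw [hNeq] at hcon hyN hbN
        obtain ⟨-, h2⟩ := swap_discordant hNd hbN hyN hNxy hcon
        exact Finset.mem_union_right _ (by simp [h2])
    -- sum up
    unfold pot
    rw [← Finset.sum_erase_add _ _ hbG, ← Finset.sum_erase_add _ _ hbG]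
    have h1 : ∑ x ∈ G.erase b, w x * (invSet G M (adjSwap N i) x).card ≤
        ∑ x ∈ G.erase b, w x * (invSet G M N x).card := by
      refine Finset.sum_le_sum fun x hx => ?_
      have hxG := Finset.mem_of_mem_erase hx
      have hxb := Finset.ne_of_mem_erase hx
      exact Nat.mul_le_mul_left _ (Finset.card_le_card (hsub x hxG hxb))
    have h2 : w b * (invSet G M (adjSwap N i) b).card ≤ w b * (invSet G M N b).card + 2 := by
      have hc : (invSet G M (adjSwap N i) b).card ≤ (invSet G M N b).card + 1 := by
        calc (invSet G M (adjSwap N i) b).card ≤ (invSet G M N b ∪ {a}).card :=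
              Finset.card_le_card hsubb
          _ ≤ (invSet G M N b).card + 1 := by
              refine le_trans (Finset.card_union_le _ _) ?_; simp
      calc w b * (invSet G M (adjSwap N i) b).card ≤ w b * ((invSet G M N b).card + 1) :=
            Nat.mul_le_mul_left _ hc
        _ = w b * (invSet G M N b).card + w b := by ring
        _ ≤ w b * (invSet G M N b).card + 2 := by have := hw b; omega
    omega

lemma doPaid_perm (ps : List ℕ) (N : List α) : (doPaid N ps).Perm N := by
  induction ps generalizing N with
  | nil => rfl
  | cons p ps ih =>
    show (doPaid (adjSwap N p) ps).Perm N
    exact (ih (adjSwap N p)).trans (adjSwap_perm N p)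

lemma pot_doPaid {G : Finset α} {w : α → ℕ} {M N : List α} (ps : List ℕ) (hN : N.Nodup)
    (hmem : ∀ x, x ∈ N ↔ x ∈ G) (hw : ∀ x, w x ≤ 2) :
    pot G w M (doPaid N ps) ≤ pot G w M N + 2 * ps.length := by
  induction ps generalizing N with
  | nil => simp [doPaid]
  | cons p ps ih =>
    show pot G w M (doPaid (adjSwap N p) ps) ≤ pot G w M N + 2 * (p :: ps).length
    have hperm := adjSwap_perm N p
    have hN' : (adjSwap N p).Nodup := hperm.nodup_iff.2 hN
    have hmem' : ∀ x, x ∈ adjSwap N p ↔ x ∈ G := fun x => (hperm.mem_iff).trans (hmem x)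
    calc pot G w M (doPaid (adjSwap N p) ps) ≤ pot G w M (adjSwap N p) + 2 * ps.length :=
          ih hN' hmem'
      _ ≤ pot G w M N + 2 + 2 * ps.length := by
          have := pot_adjSwap (M := M) p hN hmem hw; omega
      _ = pot G w M N + 2 * (p :: ps).length := by simp; ring


lemma access_main {G : Finset α} {w₁ w₂ w₁' w₂' : α → ℕ} {M₁ M₂ N : List α} {r : α} (j : ℕ)
    (hM₁ : M₁.Nodup) (hm₁ : ∀ x, x ∈ M₁ ↔ x ∈ G)
    (hM₂ : M₂.Nodup) (hm₂ : ∀ x, x ∈ M₂ ↔ x ∈ G)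
    (hN : N.Nodup) (hmN : ∀ x, x ∈ N ↔ x ∈ G)
    (hr : r ∈ G)
    (hw1r : w₁ r = 1) (hw2r : w₂ r = 2) (hw2'r : w₂' r = 1)
    (hw1' : ∀ x, x ≠ r → w₁' x = w₁ x) (hw2' : ∀ x, x ≠ r → w₂' x = w₂ x)
    (hw1le : ∀ x, w₁ x ≤ 2) :
    (M₁.idxOf r + 1) + (M₂.idxOf r + 1) +
      (pot G w₁' (r :: M₁.erase r) (freeMove N r j) + pot G w₂' M₂ (freeMove N r j))
      ≤ pot G w₁ M₁ N + pot G w₂ M₂ N + 4 * (N.idxOf r + 1) := by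
  have hrN : r ∈ N := (hmN r).2 hr
  have hrM₁ : r ∈ M₁ := (hm₁ r).2 hr
  set i := N.idxOf r with hi
  set n' := min j i with hn'
  have hiltN : i < N.length := List.idxOf_lt_length_iff.2 hrN
  have hni : n' ≤ i := min_le_right _ _
  set E := N.erase r with hE
  have hElen : E.length = N.length - 1 := List.length_erase_of_mem hrN
  have hnE : n' ≤ E.length := by omega
  have hEnd : E.Nodup := hN.erase r
  have hrE : r ∉ E := hN.not_mem_erase
  have hNform : freeMove N r j = E.take n' ++ r :: E.drop n' := by
    rw [freeMove]
    exact insertIdx_eq_take_drop' E n' r hnE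
  set N' := freeMove N r j with hN'def
  have hN'perm : N'.Perm N := by
    rw [hNform]
    refine List.Perm.trans List.perm_middle ?_
    rw [List.take_append_drop]
    exact (List.perm_cons_erase hrN).symm
  have hN'nd : N'.Nodup := hN'perm.nodup_iff.2 hN
  have hmN' : ∀ x, x ∈ N' ↔ x ∈ G := fun x => hN'perm.mem_iff.trans (hmN x)
  have hrTake : r ∉ E.take n' := fun h => hrE (List.mem_of_mem_take h)
  have hlenTake : (E.take n').length = n' := by simp [List.length_take]; omega
  have hidx'r : N'.idxOf r = n' := by
    rw [hNform, List.idxOf_append_of_notMem hrTake, List.idxOf_cons_self, hlenTake]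
    omega
  have hEtake : E.take n' = N.take n' := by
    have h1 : E = N.take i ++ N.drop (i + 1) := by
      rw [hE, List.erase_eq_eraseIdx_of_idxOf rfl, ← hi, eraseIdx_eq_take_drop']
    rw [h1, List.take_append_of_le_length (by simp [List.length_take]; omega),
      List.take_take, min_eq_left hni]
  have hlenNtake : (N.take n').toFinset.card = n' := by
    rw [List.toFinset_card_of_nodup (hN.sublist (List.take_sublist _ _))]
    simp [List.length_take]; omega
  -- f1
  have f1 : ∀ x, x ≠ r → x ∈ N → (N'.idxOf x < N'.idxOf r ↔ x ∈ N.take n') := by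
    intro x hxr hxN
    rw [hidx'r, ← hEtake]
    constructor
    · intro hlt
      by_contra hnt
      have hxE : x ∈ E := (List.mem_erase_of_ne hxr).2 hxN
      have hxdrop : x ∈ E.drop n' := by
        have := List.take_append_drop n' E
        rw [← this] at hxE
        rcases List.mem_append.1 hxE with h | h
        · exact absurd h hnt
        · exact h
      have : N'.idxOf x = n' + ((r :: E.drop n').idxOf x) := by
        rw [hNform, List.idxOf_append_of_notMem ?_, hlenTake]
        intro hmem
        exact (List.disjoint_take_drop hEnd le_rfl) hmem hxdrop
      omega
    · intro hmem
      rw [hNform, List.idxOf_append_of_mem hmem]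
      calc (E.take n').idxOf x < (E.take n').length := List.idxOf_lt_length_iff.2 hmem
        _ = n' := hlenTake
  -- f2
  have hsubN : E.Sublist N := List.erase_sublist (a := r) (l := N)
  have hsubN' : E.Sublist N' := by
    rw [hNform]
    conv_lhs => rw [← List.take_append_drop n' E]
    exact (List.Sublist.refl _).append (List.sublist_cons_self _ _)
  have f2 : ∀ x y, x ≠ r → y ≠ r → x ∈ N → y ∈ N →
      (N'.idxOf x < N'.idxOf y ↔ N.idxOf x < N.idxOf y) := by
    intro x y hxr hyr hxN hyN
    have hxE : x ∈ E := (List.mem_erase_of_ne hxr).2 hxN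
    have hyE : y ∈ E := (List.mem_erase_of_ne hyr).2 hyN
    rw [← sublist_bef hsubN' hN'nd hxE hyE, sublist_bef hsubN hN hxE hyE]
  -- M₁' facts
  set M₁' : List α := r :: M₁.erase r with hM₁'def
  have hM₁'perm : M₁'.Perm M₁ := (List.perm_cons_erase hrM₁).symm
  have hM₁'nd : M₁'.Nodup := hM₁'perm.nodup_iff.2 hM₁
  have g2 : M₁'.idxOf r = 0 := List.idxOf_cons_self
  have g1 : ∀ y x, y ≠ r → x ≠ r → y ∈ M₁ → x ∈ M₁ →
      (M₁'.idxOf y < M₁'.idxOf x ↔ M₁.idxOf y < M₁.idxOf x) := by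
    intro y x hyr hxr hyM hxM
    have hyE : y ∈ M₁.erase r := (List.mem_erase_of_ne hyr).2 hyM
    have hxE : x ∈ M₁.erase r := (List.mem_erase_of_ne hxr).2 hxM
    rw [hM₁'def, List.idxOf_cons_ne _ (Ne.symm hyr), List.idxOf_cons_ne _ (Ne.symm hxr)]
    have := sublist_bef (List.erase_sublist (a := r) (l := M₁)) hM₁ hyE hxE
    constructor
    · intro h; exact this.1 (by omega)
    · intro h; have := this.2 h; omega
  -- potential inequality 1
  set I₁ := (invSet G M₁ N r).card with hI₁
  set I₂ := (invSet G M₂ N r).card with hI₂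
  have claim0 : invSet G M₁' N' r = ∅ := by
    ext y
    simp only [invSet, Finset.mem_filter, Finset.notMem_empty, iff_false]
    rintro ⟨-, h1, -⟩
    rw [g2] at h1
    omega
  have claim1 : ∀ x ∈ G.erase r,
      (invSet G M₁' N' x).card ≤ (invSet G M₁ N x).card + (if x ∈ N.take n' then 1 else 0) := by
    intro x hx
    have hxG := Finset.mem_of_mem_erase hx
    have hxr := Finset.ne_of_mem_erase hx
    have hxN : x ∈ N := (hmN x).2 hxG
    have hxM : x ∈ M₁ := (hm₁ x).2 hxG
    by_cases hmem : x ∈ N.take n'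
    · rw [if_pos hmem]
      have hsub : invSet G M₁' N' x ⊆ invSet G M₁ N x ∪ {r} := by
        intro y hy
        simp only [invSet, Finset.mem_filter] at hy
        obtain ⟨hyG, c1, c2⟩ := hy
        by_cases hyr : y = r
        · exact Finset.mem_union_right _ (by simp [hyr])
        · refine Finset.mem_union_left _ ?_
          simp only [invSet, Finset.mem_filter]
          exact ⟨hyG, (g1 y x hyr hxr ((hm₁ y).2 hyG) hxM).1 c1,
            (f2 x y hxr hyr hxN ((hmN y).2 hyG)).1 c2⟩
      calc (invSet G M₁' N' x).card ≤ (invSet G M₁ N x ∪ {r}).card := Finset.card_le_card hsub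
        _ ≤ (invSet G M₁ N x).card + 1 := le_trans (Finset.card_union_le _ _) (by simp)
    · rw [if_neg hmem]
      have hsub : invSet G M₁' N' x ⊆ invSet G M₁ N x := by
        intro y hy
        simp only [invSet, Finset.mem_filter] at hy
        obtain ⟨hyG, c1, c2⟩ := hy
        by_cases hyr : y = r
        · subst hyr
          exact absurd ((f1 x hxr hxN).1 c2) hmem
        · simp only [invSet, Finset.mem_filter]
          exact ⟨hyG, (g1 y x hyr hxr ((hm₁ y).2 hyG) hxM).1 c1,
            (f2 x y hxr hyr hxN ((hmN y).2 hyG)).1 c2⟩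
      exact Finset.card_le_card hsub |>.trans (by omega)
  have hrG : r ∈ G := hr
  have sum_ind : ∑ x ∈ G.erase r, (if x ∈ N.take n' then 1 else 0) ≤ n' := by
    calc ∑ x ∈ G.erase r, (if x ∈ N.take n' then 1 else 0)
        = ((G.erase r).filter (fun x => x ∈ N.take n')).card := by
          rw [Finset.card_filter]
      _ ≤ (N.take n').toFinset.card := by
          refine Finset.card_le_card ?_
          intro x hx
          simp only [Finset.mem_filter] at hx
          exact List.mem_toFinset.2 hx.2
      _ = n' := hlenNtake
  have hpot1 : pot G w₁' M₁' N' + I₁ ≤ pot G w₁ M₁ N + 2 * n' := by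
    have e1 : pot G w₁' M₁' N' = ∑ x ∈ G.erase r, w₁' x * (invSet G M₁' N' x).card := by
      rw [pot, ← Finset.sum_erase_add _ _ hrG, claim0]
      simp
    have e2 : pot G w₁ M₁ N = (∑ x ∈ G.erase r, w₁ x * (invSet G M₁ N x).card) + I₁ := by
      rw [pot, ← Finset.sum_erase_add _ _ hrG, hw1r, one_mul]
    have e3 : ∑ x ∈ G.erase r, w₁' x * (invSet G M₁' N' x).card ≤
        (∑ x ∈ G.erase r, w₁ x * (invSet G M₁ N x).card) + 2 * n' := by
      calc ∑ x ∈ G.erase r, w₁' x * (invSet G M₁' N' x).card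
          ≤ ∑ x ∈ G.erase r,
              (w₁ x * (invSet G M₁ N x).card + 2 * (if x ∈ N.take n' then 1 else 0)) := by
            refine Finset.sum_le_sum fun x hx => ?_
            have hxr := Finset.ne_of_mem_erase hx
            rw [hw1' x hxr]
            calc w₁ x * (invSet G M₁' N' x).card
                ≤ w₁ x * ((invSet G M₁ N x).card + (if x ∈ N.take n' then 1 else 0)) :=
                  Nat.mul_le_mul_left _ (claim1 x hx)
              _ = w₁ x * (invSet G M₁ N x).card + w₁ x * (if x ∈ N.take n' then 1 else 0) := by
                  ring
              _ ≤ w₁ x * (invSet G M₁ N x).card + 2 * (if x ∈ N.take n' then 1 else 0) := by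
                  have := hw1le x
                  have h2 : w₁ x * (if x ∈ N.take n' then 1 else 0) ≤
                      2 * (if x ∈ N.take n' then 1 else 0) :=
                    Nat.mul_le_mul_right _ this
                  omega
        _ = (∑ x ∈ G.erase r, w₁ x * (invSet G M₁ N x).card) +
              ∑ x ∈ G.erase r, 2 * (if x ∈ N.take n' then 1 else 0) := by
            rw [Finset.sum_add_distrib]
        _ ≤ (∑ x ∈ G.erase r, w₁ x * (invSet G M₁ N x).card) + 2 * n' := by
            rw [← Finset.mul_sum]
            have := sum_ind
            omega
    omega
  -- potential inequality 2
  have hsubfin : (N.take n').toFinset ⊆ (N.take i).toFinset := by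
    intro x hx
    rw [List.mem_toFinset] at hx ⊢
    have := (mem_take_iff hN).1 hx
    exact (mem_take_iff hN).2 ⟨this.1, by omega⟩
  have hlenItake : (N.take i).toFinset.card = i := by
    rw [List.toFinset_card_of_nodup (hN.sublist (List.take_sublist _ _))]
    simp [List.length_take]; omega
  have claim2 : invSet G M₂ N' r ⊆ invSet G M₂ N r ∪
      ((N.take i).toFinset \ (N.take n').toFinset) := by
    intro y hy
    simp only [invSet, Finset.mem_filter] at hy
    obtain ⟨hyG, c1, c2⟩ := hy
    have hyr : y ≠ r := by
      intro h; rw [h] at c1; omega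
    have hyN : y ∈ N := (hmN y).2 hyG
    by_cases hNo : N.idxOf r < N.idxOf y
    · exact Finset.mem_union_left _ (by simp only [invSet, Finset.mem_filter]; exact ⟨hyG, c1, hNo⟩)
    · refine Finset.mem_union_right _ ?_
      have hyneq : N.idxOf y < N.idxOf r := by
        rcases bef_trichotomy hN hyN hrN hyr with h | h
        · exact h
        · omega
      refine Finset.mem_sdiff.2 ⟨List.mem_toFinset.2 ((mem_take_iff hN).2 ⟨hyN, by omega⟩), ?_⟩
      intro hcon
      rw [List.mem_toFinset] at hcon
      have := (f1 y hyr hyN).2 hcon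
      omega
  have claim3 : ∀ x ∈ G.erase r, invSet G M₂ N' x ⊆ invSet G M₂ N x := by
    intro x hx y hy
    have hxG := Finset.mem_of_mem_erase hx
    have hxr := Finset.ne_of_mem_erase hx
    have hxN : x ∈ N := (hmN x).2 hxG
    simp only [invSet, Finset.mem_filter] at hy ⊢
    obtain ⟨hyG, c1, c2⟩ := hy
    by_cases hyr : y = r
    · subst hyr
      refine ⟨hyG, c1, ?_⟩
      have := (f1 x hxr hxN).1 c2
      have := (mem_take_iff hN).1 this
      omega
    · exact ⟨hyG, c1, (f2 x y hxr hyr hxN ((hmN y).2 hyG)).1 c2⟩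
  have hpot2 : pot G w₂' M₂ N' + I₂ ≤ pot G w₂ M₂ N + (i - n') := by
    have e1 : pot G w₂' M₂ N' = (∑ x ∈ G.erase r, w₂' x * (invSet G M₂ N' x).card) +
        (invSet G M₂ N' r).card := by
      rw [pot, ← Finset.sum_erase_add _ _ hrG, hw2'r, one_mul]
    have e2 : pot G w₂ M₂ N = (∑ x ∈ G.erase r, w₂ x * (invSet G M₂ N x).card) + 2 * I₂ := by
      rw [pot, ← Finset.sum_erase_add _ _ hrG, hw2r]
    have e3 : ∑ x ∈ G.erase r, w₂' x * (invSet G M₂ N' x).card ≤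
        ∑ x ∈ G.erase r, w₂ x * (invSet G M₂ N x).card := by
      refine Finset.sum_le_sum fun x hx => ?_
      rw [hw2' x (Finset.ne_of_mem_erase hx)]
      exact Nat.mul_le_mul_left _ (Finset.card_le_card (claim3 x hx))
    have e4 : (invSet G M₂ N' r).card ≤ I₂ + (i - n') := by
      calc (invSet G M₂ N' r).card
          ≤ (invSet G M₂ N r ∪ ((N.take i).toFinset \ (N.take n').toFinset)).card :=
            Finset.card_le_card claim2
        _ ≤ I₂ + ((N.take i).toFinset \ (N.take n').toFinset).card :=
            Finset.card_union_le _ _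
        _ = I₂ + (i - n') := by
            rw [Finset.card_sdiff_of_subset hsubfin, hlenItake, hlenNtake]
    omega
  -- access costs
  have hS : (G.filter (fun y => N.idxOf y < N.idxOf r)).card = i :=
    (indexOf_eq_card hN hmN hrN).symm
  have hcost : ∀ (M : List α), M.Nodup → (∀ x, x ∈ M ↔ x ∈ G) →
      M.idxOf r ≤ (invSet G M N r).card + i := by
    intro M hMnd hmM
    have hrM : r ∈ M := (hmM r).2 hr
    rw [indexOf_eq_card hMnd hmM hrM]
    have hsub : G.filter (fun y => M.idxOf y < M.idxOf r) ⊆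
        invSet G M N r ∪ G.filter (fun y => N.idxOf y < N.idxOf r) := by
      intro y hy
      simp only [Finset.mem_filter] at hy
      obtain ⟨hyG, hlt⟩ := hy
      have hyr : y ≠ r := by intro h; rw [h] at hlt; omega
      have hyN : y ∈ N := (hmN y).2 hyG
      rcases bef_trichotomy hN hyN hrN hyr with h | h
      · exact Finset.mem_union_right _ (Finset.mem_filter.2 ⟨hyG, h⟩)
      · exact Finset.mem_union_left _ (Finset.mem_filter.2 ⟨hyG, hlt, h⟩)
    calc (G.filter (fun y => M.idxOf y < M.idxOf r)).card
        ≤ (invSet G M N r ∪ G.filter (fun y => N.idxOf y < N.idxOf r)).card :=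
          Finset.card_le_card hsub
      _ ≤ (invSet G M N r).card + i := by
          refine le_trans (Finset.card_union_le _ _) ?_
          rw [hS]
  have hcost1 : M₁.idxOf r ≤ I₁ + i := hcost M₁ hM₁ hm₁
  have hcost2 : M₂.idxOf r ≤ I₂ + i := hcost M₂ hM₂ hm₂
  omega


def wt (b : α → Bool) (x : α) : ℕ := if b x then 1 else 2

lemma wt_le (b : α → Bool) (x : α) : wt b x ≤ 2 := by
  unfold wt; split <;> omega

lemma freeMove_perm {N : List α} {r : α} (j : ℕ) (hr : r ∈ N) : (freeMove N r j).Perm N := by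
  have hnE : min j (N.idxOf r) ≤ (N.erase r).length := by
    have h1 := List.idxOf_lt_length_iff.2 hr
    have h2 := List.length_erase_of_mem hr
    have := min_le_right j (N.idxOf r)
    omega
  rw [freeMove, insertIdx_eq_take_drop' _ _ _ hnE]
  refine List.Perm.trans List.perm_middle ?_
  rw [List.take_append_drop]
  exact (List.perm_cons_erase hr).symm

lemma main_bound (L : List α) (hL : L.Nodup) (σ : List α) :
    ∀ (b : α → Bool) (M₁ M₂ N : List α) (as : List (Action α)),
    M₁.Perm L → M₂.Perm L → N.Perm L → (∀ r ∈ σ, r ∈ L) → as.length = σ.length →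
    mtf2Cost 1 b M₁ σ + mtf2Cost 1 (fun x => !(b x)) M₂ σ ≤
      4 * serveCost 1 N σ as +
      (pot L.toFinset (wt b) M₁ N + pot L.toFinset (wt (fun x => !(b x))) M₂ N) := by
  induction σ with
  | nil =>
    intro b M₁ M₂ N as _ _ _ _ _
    simp [mtf2Cost]
  | cons r σ ih =>
    intro b M₁ M₂ N as h1 h2 h3 hσ hlen
    cases as with
    | nil => simp at hlen
    | cons a as =>
    have hrL : r ∈ L := hσ r (List.mem_cons_self)
    set G := L.toFinset with hG
    have hrG : r ∈ G := List.mem_toFinset.2 hrL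
    have hm₁ : ∀ x, x ∈ M₁ ↔ x ∈ G := fun x => h1.mem_iff.trans List.mem_toFinset.symm
    have hm₂ : ∀ x, x ∈ M₂ ↔ x ∈ G := fun x => h2.mem_iff.trans List.mem_toFinset.symm
    have hmN : ∀ x, x ∈ N ↔ x ∈ G := fun x => h3.mem_iff.trans List.mem_toFinset.symm
    have hM₁ : M₁.Nodup := h1.nodup_iff.2 hL
    have hM₂ : M₂.Nodup := h2.nodup_iff.2 hL
    have hNd : N.Nodup := h3.nodup_iff.2 hL
    have hrM₁ : r ∈ M₁ := (hm₁ r).2 hrG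
    have hrM₂ : r ∈ M₂ := (hm₂ r).2 hrG
    -- the post-paid optimal list
    set N₂ : List α := doPaid N a.paid with hN₂
    have hN₂perm : N₂.Perm N := doPaid_perm _ _
    have hN₂L : N₂.Perm L := hN₂perm.trans h3
    have hN₂nd : N₂.Nodup := hN₂L.nodup_iff.2 hL
    have hmN₂ : ∀ x, x ∈ N₂ ↔ x ∈ G := fun x => hN₂L.mem_iff.trans List.mem_toFinset.symm
    have hrN₂ : r ∈ N₂ := (hmN₂ r).2 hrG
    -- the next optimal list
    set N₃ : List α := freeMove N₂ r a.target with hN₃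
    have hN₃L : N₃.Perm L := (freeMove_perm _ hrN₂).trans hN₂L
    -- new bits
    set b' : α → Bool := Function.update b r (!b r) with hb'
    have hbcompl : Function.update (fun x => !(b x)) r (!(!(b r))) = fun x => !(b' x) := by
      funext x
      by_cases hx : x = r
      · subst hx; simp [hb', Function.update_self]
      · simp [hb', Function.update_of_ne hx]
    have hserve : serveCost 1 N (r :: σ) (a :: as) =
        (a.paid.length + (N₂.idxOf r + 1)) + serveCost 1 N₃ σ as := rfl
    have hσ' : ∀ x ∈ σ, x ∈ L := fun x hx => hσ x (List.mem_cons_of_mem r hx)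
    have hlen' : as.length = σ.length := by simpa using hlen
    -- step inequality, two cases according to who moves
    by_cases hb : b r = true
    · -- run 1 moves to the front
      have hmtf1 : mtf2Cost 1 b M₁ (r :: σ) =
          (M₁.idxOf r + 1) + mtf2Cost 1 b' (r :: M₁.erase r) σ := by
        rw [mtf2Cost, hb']
        congr 2
        simp [hb]
      have hmtf2 : mtf2Cost 1 (fun x => !(b x)) M₂ (r :: σ) =
          (M₂.idxOf r + 1) + mtf2Cost 1 (fun x => !(b' x)) M₂ σ := by
        rw [mtf2Cost, hbcompl]
        congr 2
        simp [hb]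
      have hIH := ih b' (r :: M₁.erase r) M₂ N₃ as
        (((List.perm_cons_erase hrM₁).symm).trans h1) h2 hN₃L hσ' hlen'
      have haccess := access_main (G := G) (w₁ := wt b) (w₂ := wt (fun x => !(b x)))
        (w₁' := wt b') (w₂' := wt (fun x => !(b' x))) (M₁ := M₁) (M₂ := M₂) (N := N₂)
        (r := r) a.target hM₁ hm₁ hM₂ hm₂ hN₂nd hmN₂ hrG
        (by simp [wt, hb]) (by simp [wt, hb]) (by simp [wt, hb', Function.update_self, hb])
        (fun x hx => by simp [wt, hb', Function.update_of_ne hx])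
        (fun x hx => by simp [wt, hb', Function.update_of_ne hx])
        (wt_le b)
      have hpaid1 : pot G (wt b) M₁ N₂ ≤ pot G (wt b) M₁ N + 2 * a.paid.length :=
        pot_doPaid _ hNd hmN (wt_le b)
      have hpaid2 : pot G (wt (fun x => !(b x))) M₂ N₂ ≤
          pot G (wt (fun x => !(b x))) M₂ N + 2 * a.paid.length :=
        pot_doPaid _ hNd hmN (wt_le _)
      rw [← hN₃] at haccess
      rw [hmtf1, hmtf2, hserve]
      omega
    · -- run 2 moves to the front
      have hbf : b r = false := by revert hb; cases b r <;> simp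
      have hmtf1 : mtf2Cost 1 b M₁ (r :: σ) =
          (M₁.idxOf r + 1) + mtf2Cost 1 b' M₁ σ := by
        rw [mtf2Cost, hb']
        congr 2
        simp [hbf]
      have hmtf2 : mtf2Cost 1 (fun x => !(b x)) M₂ (r :: σ) =
          (M₂.idxOf r + 1) + mtf2Cost 1 (fun x => !(b' x)) (r :: M₂.erase r) σ := by
        rw [mtf2Cost, hbcompl]
        congr 2
        simp [hbf]
      have hIH := ih b' M₁ (r :: M₂.erase r) N₃ as
        h1 (((List.perm_cons_erase hrM₂).symm).trans h2) hN₃L hσ' hlen'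
      have haccess := access_main (G := G) (w₁ := wt (fun x => !(b x))) (w₂ := wt b)
        (w₁' := wt (fun x => !(b' x))) (w₂' := wt b') (M₁ := M₂) (M₂ := M₁) (N := N₂)
        (r := r) a.target hM₂ hm₂ hM₁ hm₁ hN₂nd hmN₂ hrG
        (by simp [wt, hbf]) (by simp [wt, hbf]) (by simp [wt, hb', Function.update_self, hbf])
        (fun x hx => by simp [wt, hb', Function.update_of_ne hx])
        (fun x hx => by simp [wt, hb', Function.update_of_ne hx])
        (wt_le _)
      have hpaid1 : pot G (wt b) M₁ N₂ ≤ pot G (wt b) M₁ N + 2 * a.paid.length :=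
        pot_doPaid _ hNd hmN (wt_le b)
      have hpaid2 : pot G (wt (fun x => !(b x))) M₂ N₂ ≤
          pot G (wt (fun x => !(b x))) M₂ N + 2 * a.paid.length :=
        pot_doPaid _ hNd hmN (wt_le _)
      rw [← hN₃] at haccess
      rw [hmtf1, hmtf2, hserve]
      omega


end ListUpdate

open ListUpdate

/-- For every initial list and every request sequence, under the full cost model,
`MTFO(σ) + MTFE(σ) ≤ 4·OPT(σ)`. -/
theorem mtfo_add_mtfe_le_four_opt {α : Type} [DecidableEq α]
    (L : List α) (hL : L.Nodup) (σ : List α) (hσ : ∀ r ∈ σ, r ∈ L) :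
    mtfoCost 1 L σ + mtfeCost 1 L σ ≤ 4 * optCost 1 L σ := by
  
  classical
  have hne : {n | ∃ as : List (Action α), as.length = σ.length ∧ serveCost 1 L σ as = n}.Nonempty :=
    ⟨serveCost 1 L σ (σ.map fun _ => ⟨[], 0⟩), σ.map fun _ => ⟨[], 0⟩, by simp, rfl⟩
  obtain ⟨as, hlen, hcost⟩ := Nat.sInf_mem hne
  have h := main_bound L hL σ (fun _ => true) L L L as (List.Perm.refl L) (List.Perm.refl L)
    (List.Perm.refl L) hσ hlen
  rw [pot_self, pot_self] at h
  have he1 : mtfoCost 1 L σ = mtf2Cost 1 (fun _ => true) L σ := rfl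
  have he2 : mtfeCost 1 L σ = mtf2Cost 1 (fun x => !((fun _ : α => true) x)) L σ := rfl
  have he3 : optCost 1 L σ = serveCost 1 L σ as := hcost.symm
  rw [he1, he2, he3]
  omega
end

section
/- For every ε > 0 and every M, there exist a list with an initial order and a request sequence σ such that, under the full cost model, OPT(σ) ≥ M and min(MTFO(σ), MTFE(σ)) ≥ (1.75 − ε)·OPT(σ). Consequently, the algorithm that serves each input by the cheaper of MTFO and MTFE has competitive ratio at least 1.75 under the full cost model. -/
namespace ListUpdate

variable {α : Type} [DecidableEq α]

/-- triangular numbers -/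
def tri : ℕ → ℕ
  | 0 => 0
  | n + 1 => tri n + n + 1

def dups : List α → List α
  | [] => []
  | x :: S => x :: x :: dups S

def reps {β : Type} : ℕ → List β → List β
  | 0, _ => []
  | k + 1, R => R ++ reps k R

lemma length_dups (S : List α) : (dups S).length = 2 * S.length := by
  induction S <;> simp [dups, *] <;> omega

lemma mem_dups {x : α} {S : List α} : x ∈ dups S ↔ x ∈ S := by
  induction S <;> simp [dups, *]

lemma length_reps {β : Type} (k : ℕ) (R : List β) : (reps k R).length = k * R.length := by
  induction k <;> simp [reps, *] <;> ring

lemma mem_reps {β : Type} {x : β} {k : ℕ} {R : List β} (h : x ∈ reps k R) : x ∈ R := by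
  induction k with
  | zero => simp [reps] at h
  | succ n ih => rcases (List.mem_append.1 h) with h | h; exact h; exact ih h

lemma aux_index {x : α} (P S : List α) (hx : x ∉ P) :
    (P ++ x :: S).idxOf x = P.length := by
  rw [List.idxOf_append_of_notMem hx, List.idxOf_cons_self]; ring

lemma aux_erase {x : α} (P S : List α) (hx : x ∉ P) :
    (P ++ x :: S).erase x = P ++ S := by
  rw [List.erase_append_right _ hx, List.erase_cons_head]

lemma insertIdx_append_length (P Q : List α) (x : α) :
    (P ++ Q).insertIdx P.length x = P ++ x :: Q := by
  induction P with
  | nil => rfl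
  | cons a P ih => simpa [List.insertIdx_succ_cons] using ih

def bitsA : (α → Bool) → List α → (α → Bool)
  | bits, [] => bits
  | bits, r :: σ => bitsA (Function.update bits r (!bits r)) σ

lemma mtf2Cost_append (c : ℕ) (bits : α → Bool) (L xs ys : List α) :
    mtf2Cost c bits L (xs ++ ys) =
      mtf2Cost c bits L xs + mtf2Cost c (bitsA bits xs) (mtf2List bits L xs) ys := by
  induction xs generalizing bits L with
  | nil => simp [mtf2Cost, mtf2List, bitsA]
  | cons r σ ih => simp [mtf2Cost, mtf2List, bitsA, ih, Nat.add_assoc]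

lemma mtf2List_append (bits : α → Bool) (L xs ys : List α) :
    mtf2List bits L (xs ++ ys) = mtf2List (bitsA bits xs) (mtf2List bits L xs) ys := by
  induction xs generalizing bits L with
  | nil => simp [mtf2List, bitsA]
  | cons r σ ih => simp [mtf2List, bitsA, ih]

/-- single pass, bits true: each item moved to front. -/
lemma pass_move (S : List α) : ∀ (P : List α) (bits : α → Bool),
    (P ++ S).Nodup → (∀ x ∈ S, bits x = true) →
    mtf2Cost 1 bits (P ++ S) S = S.length * P.length + tri S.length ∧
    mtf2List bits (P ++ S) S = S.reverse ++ P ∧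
    ∀ y, bitsA bits S y = if y ∈ S then false else bits y := by
  induction S with
  | nil => intro P bits _ _; simp [mtf2Cost, mtf2List, bitsA, tri]
  | cons x S ih =>
    intro P bits hnd hb
    have hnd1 : (x :: (P ++ S)).Nodup := (List.perm_middle.nodup_iff).1 hnd
    have hxPS : x ∉ P ++ S := (List.nodup_cons.1 hnd1).1
    have hxP : x ∉ P := fun h => hxPS (List.mem_append.2 (Or.inl h))
    have hxS : x ∉ S := fun h => hxPS (List.mem_append.2 (Or.inr h))
    have hbx : bits x = true := hb x (by simp)
    have hb' : ∀ y ∈ S, Function.update bits x false y = true := by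
      intro y hy
      rw [Function.update_of_ne (fun h => hxS (by rw [← h]; exact hy))]
      exact hb y (by simp [hy])
    have hnd' : ((x :: P) ++ S).Nodup := hnd1
    obtain ⟨hc, hl, hbb⟩ := ih (x :: P) (Function.update bits x false) hnd' hb'
    have hidx : (P ++ x :: S).idxOf x = P.length := aux_index P S hxP
    have her : (P ++ x :: S).erase x = P ++ S := aux_erase P S hxP
    refine ⟨?_, ?_, ?_⟩
    · simp only [mtf2Cost, hbx, Bool.not_true, Bool.false_eq_true, if_false, her, hidx]
      have : x :: (P ++ S) = (x :: P) ++ S := rfl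
      rw [this, hc]
      simp [tri, List.length_cons]
      ring
    · simp only [mtf2List, hbx, Bool.not_true, Bool.false_eq_true, if_false, her]
      have : x :: (P ++ S) = (x :: P) ++ S := rfl
      rw [this, hl]
      simp
    · intro y
      simp only [bitsA, hbx, Bool.not_true, hbb]
      by_cases hyx : y = x
      · subst hyx; simp [hxS]
      · simp [hyx, Function.update_of_ne hyx, List.mem_cons]

/-- single pass, bits false: static scan of a suffix. -/
lemma pass_static (S : List α) : ∀ (P : List α) (bits : α → Bool),
    (P ++ S).Nodup → (∀ x ∈ S, bits x = false) →
    mtf2Cost 1 bits (P ++ S) S = S.length * P.length + tri S.length ∧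
    mtf2List bits (P ++ S) S = P ++ S ∧
    ∀ y, bitsA bits S y = if y ∈ S then true else bits y := by
  induction S with
  | nil => intro P bits _ _; simp [mtf2Cost, mtf2List, bitsA, tri]
  | cons x S ih =>
    intro P bits hnd hb
    have hnd1 : (x :: (P ++ S)).Nodup := (List.perm_middle.nodup_iff).1 hnd
    have hxPS : x ∉ P ++ S := (List.nodup_cons.1 hnd1).1
    have hxP : x ∉ P := fun h => hxPS (List.mem_append.2 (Or.inl h))
    have hxS : x ∉ S := fun h => hxPS (List.mem_append.2 (Or.inr h))
    have hbx : bits x = false := hb x (by simp)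
    have hb' : ∀ y ∈ S, Function.update bits x true y = false := by
      intro y hy
      rw [Function.update_of_ne (fun h => hxS (by rw [← h]; exact hy))]
      exact hb y (by simp [hy])
    have hnd' : ((P ++ [x]) ++ S).Nodup := by
      rw [← List.append_cons]; exact hnd
    obtain ⟨hc, hl, hbb⟩ := ih (P ++ [x]) (Function.update bits x true) hnd' hb'
    have hidx : (P ++ x :: S).idxOf x = P.length := aux_index P S hxP
    refine ⟨?_, ?_, ?_⟩
    · simp only [mtf2Cost, hbx, Bool.not_false, if_true, hidx]
      rw [List.append_cons, hc]
      simp [tri, List.length_cons]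
      ring
    · simp only [mtf2List, hbx, Bool.not_false, if_true]
      rw [List.append_cons, hl, ← List.append_cons]
    · intro y
      simp only [bitsA, hbx, Bool.not_false, hbb]
      by_cases hyx : y = x
      · subst hyx; simp [hxS]
      · simp [hyx, Function.update_of_ne hyx, List.mem_cons]

/-- doubled pass, bits true: move on first access, second access at front. -/
lemma pass_dup_move (S : List α) : ∀ (P : List α) (bits : α → Bool),
    (P ++ S).Nodup → (∀ x ∈ S, bits x = true) →
    mtf2Cost 1 bits (P ++ S) (dups S) = S.length * P.length + tri S.length + S.length ∧
    mtf2List bits (P ++ S) (dups S) = S.reverse ++ P ∧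
    bitsA bits (dups S) = bits := by
  induction S with
  | nil => intro P bits _ _; simp [mtf2Cost, mtf2List, bitsA, tri, dups]
  | cons x S ih =>
    intro P bits hnd hb
    have hnd1 : (x :: (P ++ S)).Nodup := (List.perm_middle.nodup_iff).1 hnd
    have hxPS : x ∉ P ++ S := (List.nodup_cons.1 hnd1).1
    have hxP : x ∉ P := fun h => hxPS (List.mem_append.2 (Or.inl h))
    have hxS : x ∉ S := fun h => hxPS (List.mem_append.2 (Or.inr h))
    have hbx : bits x = true := hb x (by simp)
    have hb' : ∀ y ∈ S, bits y = true := fun y hy => hb y (by simp [hy])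
    obtain ⟨hc, hl, hbb⟩ := ih (x :: P) bits hnd1 hb'
    have hidx : (P ++ x :: S).idxOf x = P.length := aux_index P S hxP
    have her : (P ++ x :: S).erase x = P ++ S := aux_erase P S hxP
    have hupd : Function.update (Function.update bits x false) x true = bits := by
      rw [Function.update_idem, ← hbx, Function.update_eq_self]
    refine ⟨?_, ?_, ?_⟩
    · show (P ++ x :: S).idxOf x + 1 + _ = _
      rw [hidx]
      simp only [dups, mtf2Cost, hbx, Bool.not_true, Bool.false_eq_true, if_false, her,
        List.idxOf_cons_self, Function.update_self, Bool.not_false, if_true, hupd]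
      have : x :: (P ++ S) = (x :: P) ++ S := rfl
      rw [this, hc]
      simp [tri, List.length_cons]
      ring
    · simp only [dups, mtf2List, hbx, Bool.not_true, Bool.false_eq_true, if_false, her,
        List.idxOf_cons_self, Function.update_self, Bool.not_false, if_true, hupd]
      have : x :: (P ++ S) = (x :: P) ++ S := rfl
      rw [this, hl]
      simp
    · simp only [dups, bitsA, hbx, Bool.not_true, Function.update_self, Bool.not_false, hupd, hbb]

/-- doubled pass, bits false: both accesses at the back, then move on second. -/
lemma pass_dup_back (U : List α) : ∀ (P : List α) (bits : α → Bool),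
    (P ++ U.reverse).Nodup → (∀ x ∈ U, bits x = false) →
    mtf2Cost 1 bits (P ++ U.reverse) (dups U) = 2 * U.length * (P.length + U.length) ∧
    mtf2List bits (P ++ U.reverse) (dups U) = U.reverse ++ P ∧
    bitsA bits (dups U) = bits := by
  induction U with
  | nil => intro P bits _ _; simp [mtf2Cost, mtf2List, bitsA, dups]
  | cons x U ih =>
    intro P bits hnd hb
    have hrev : (x :: U).reverse = U.reverse ++ [x] := by simp
    have hL : P ++ (x :: U).reverse = (P ++ U.reverse) ++ [x] := by
      rw [hrev, List.append_assoc]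
    have hnd2 : ((P ++ U.reverse) ++ [x]).Nodup := by rw [← hL]; exact hnd
    have hnd1 : (x :: ((P ++ U.reverse) ++ [])).Nodup := (List.perm_middle.nodup_iff).1 hnd2
    have hxQ : x ∉ P ++ U.reverse := by
      have := (List.nodup_cons.1 hnd1).1
      intro h; exact this (by simp [h])
    have hxU : x ∉ U := fun h => hxQ (by simp [h])
    have hbx : bits x = false := hb x (by simp)
    have hb' : ∀ y ∈ U, bits y = false := fun y hy => hb y (by simp [hy])
    have hidx : ((P ++ U.reverse) ++ [x]).idxOf x = P.length + U.length := by
      have := aux_index (P ++ U.reverse) [] hxQ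
      simpa using this
    have her : ((P ++ U.reverse) ++ [x]).erase x = P ++ U.reverse := by
      have := aux_erase (P ++ U.reverse) [] hxQ
      simpa using this
    have hupd : Function.update (Function.update bits x true) x false = bits := by
      rw [Function.update_idem, ← hbx, Function.update_eq_self]
    have hnd' : ((x :: P) ++ U.reverse).Nodup := by
      have : (x :: (P ++ U.reverse)).Nodup := by
        rw [List.append_nil] at hnd1; exact hnd1
      exact this
    obtain ⟨hc, hl, hbb⟩ := ih (x :: P) bits hnd' hb'
    refine ⟨?_, ?_, ?_⟩
    · rw [hL]
      simp only [dups, mtf2Cost, hbx, Bool.not_false, if_true, hidx,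
        Function.update_self, Bool.not_true, Bool.false_eq_true, if_false, her, hupd]
      have : x :: (P ++ U.reverse) = (x :: P) ++ U.reverse := rfl
      rw [this, hc]
      simp [List.length_cons]
      ring
    · rw [hL]
      simp only [dups, mtf2List, hbx, Bool.not_false, if_true, hidx,
        Function.update_self, Bool.not_true, Bool.false_eq_true, if_false, her, hupd]
      have : x :: (P ++ U.reverse) = (x :: P) ++ U.reverse := rfl
      rw [this, hl, hrev, List.append_assoc]
      rfl
    · simp only [dups, bitsA, hbx, Bool.not_false, Function.update_self, Bool.not_true, hupd, hbb]

lemma bitsA_append (bits : α → Bool) (xs ys : List α) :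
    bitsA bits (xs ++ ys) = bitsA (bitsA bits xs) ys := by
  induction xs generalizing bits with
  | nil => rfl
  | cons r σ ih => simp [bitsA, ih]

/-- the request sequence of one round -/
def roundSeq (l : ℕ) : List ℕ :=
  List.range l ++ (dups (List.range l) ++
    ((List.range l).reverse ++ dups ((List.range l).reverse)))

/-- cost of either MTF2 algorithm on one round -/
def roundCost (l : ℕ) : ℕ := 3 * tri l + 2 * l * l + l

lemma mtfo_round (l : ℕ) (bits : ℕ → Bool) (hb : ∀ x ∈ List.range l, bits x = true) :
    mtf2Cost 1 bits (List.range l) (roundSeq l) = roundCost l ∧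
    mtf2List bits (List.range l) (roundSeq l) = List.range l ∧
    ∀ x ∈ List.range l, bitsA bits (roundSeq l) x = true := by
  set Ls := List.range l with hLs
  have hnd : Ls.Nodup := List.nodup_range (n := l)
  have hndr : Ls.reverse.Nodup := by simpa using hnd
  have hlen : Ls.length = l := List.length_range (n := l)
  have hlenr : Ls.reverse.length = l := by simp [hlen]
  obtain ⟨c1, l1, b1⟩ := pass_move Ls [] bits (by simpa using hnd) hb
  have hb1 : ∀ x ∈ Ls, bitsA bits Ls x = false := by
    intro x hx; rw [b1 x]; simp [hx]
  obtain ⟨c2, l2, b2⟩ := pass_dup_back Ls [] (bitsA bits Ls) (by simpa using hndr) hb1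
  have hb3pre : ∀ x ∈ Ls.reverse, bitsA bits Ls x = false := by
    intro x hx; exact hb1 x (List.mem_reverse.1 hx)
  obtain ⟨c3, l3, b3⟩ := pass_static Ls.reverse [] (bitsA bits Ls) (by simpa using hndr) hb3pre
  have hb4pre : ∀ x ∈ Ls.reverse, bitsA (bitsA bits Ls) Ls.reverse x = true := by
    intro x hx; rw [b3 x]; simp [hx]
  obtain ⟨c4, l4, b4⟩ := pass_dup_move Ls.reverse [] (bitsA (bitsA bits Ls) Ls.reverse)
    (by simpa using hndr) hb4pre
  simp only [List.nil_append, List.append_nil] at c1 l1 c2 l2 c3 l3 c4 l4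
  rw [hlen] at c1 c2
  rw [hlenr] at c3 c4
  refine ⟨?_, ?_, ?_⟩
  · rw [roundSeq, mtf2Cost_append, c1, l1, mtf2Cost_append, c2, l2, b2,
      mtf2Cost_append, c3, l3, c4]
    simp [roundCost]
    ring
  · rw [roundSeq, mtf2List_append, l1, mtf2List_append, l2, b2, mtf2List_append, l3, l4]
    simp
  · intro x hx
    rw [roundSeq, bitsA_append, bitsA_append, bitsA_append, b2, b4, b3 x]
    simp [hx]

lemma mtfe_round (l : ℕ) (bits : ℕ → Bool) (hb : ∀ x ∈ List.range l, bits x = false) :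
    mtf2Cost 1 bits (List.range l) (roundSeq l) = roundCost l ∧
    mtf2List bits (List.range l) (roundSeq l) = List.range l ∧
    ∀ x ∈ List.range l, bitsA bits (roundSeq l) x = false := by
  set Ls := List.range l with hLs
  have hnd : Ls.Nodup := List.nodup_range (n := l)
  have hndr : Ls.reverse.Nodup := by simpa using hnd
  have hlen : Ls.length = l := List.length_range (n := l)
  have hlenr : Ls.reverse.length = l := by simp [hlen]
  obtain ⟨c1, l1, b1⟩ := pass_static Ls [] bits (by simpa using hnd) hb
  have hb2 : ∀ x ∈ Ls, bitsA bits Ls x = true := by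
    intro x hx; rw [b1 x]; simp [hx]
  obtain ⟨c2, l2, b2⟩ := pass_dup_move Ls [] (bitsA bits Ls) (by simpa using hnd) hb2
  have hb3pre : ∀ x ∈ Ls.reverse, bitsA bits Ls x = true := by
    intro x hx; exact hb2 x (List.mem_reverse.1 hx)
  obtain ⟨c3, l3, b3⟩ := pass_move Ls.reverse [] (bitsA bits Ls) (by simpa using hndr) hb3pre
  have hb4pre : ∀ x ∈ Ls.reverse, bitsA (bitsA bits Ls) Ls.reverse x = false := by
    intro x hx; rw [b3 x]; simp [hx]
  obtain ⟨c4, l4, b4⟩ := pass_dup_back Ls.reverse [] (bitsA (bitsA bits Ls) Ls.reverse)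
    (by simpa using hndr) hb4pre
  simp only [List.nil_append, List.append_nil, List.reverse_reverse] at c1 l1 c2 l2 c3 l3 c4 l4
  rw [hlen] at c1 c2
  rw [hlenr] at c3 c4
  refine ⟨?_, ?_, ?_⟩
  · rw [roundSeq, mtf2Cost_append, c1, l1, mtf2Cost_append, c2, l2, b2,
      mtf2Cost_append, c3, l3, c4]
    simp [roundCost]
    ring
  · rw [roundSeq, mtf2List_append, l1, mtf2List_append, l2, b2, mtf2List_append, l3, l4]
  · intro x hx
    rw [roundSeq, bitsA_append, bitsA_append, bitsA_append, b2, b4, b3 x]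
    simp [hx]

lemma mtfo_reps (l k : ℕ) : ∀ (bits : ℕ → Bool), (∀ x ∈ List.range l, bits x = true) →
    mtf2Cost 1 bits (List.range l) (reps k (roundSeq l)) = k * roundCost l := by
  induction k with
  | zero => intro bits _; simp [reps, mtf2Cost]
  | succ n ih =>
    intro bits hb
    obtain ⟨hc, hl, hbb⟩ := mtfo_round l bits hb
    rw [reps, mtf2Cost_append, hc, hl, ih _ hbb]
    ring

lemma mtfe_reps (l k : ℕ) : ∀ (bits : ℕ → Bool), (∀ x ∈ List.range l, bits x = false) →
    mtf2Cost 1 bits (List.range l) (reps k (roundSeq l)) = k * roundCost l := by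
  induction k with
  | zero => intro bits _; simp [reps, mtf2Cost]
  | succ n ih =>
    intro bits hb
    obtain ⟨hc, hl, hbb⟩ := mtfe_round l bits hb
    rw [reps, mtf2Cost_append, hc, hl, ih _ hbb]
    ring

def act (t : ℕ) : Action α := ⟨[], t⟩

def stays : ℕ → ℕ → List (Action α)
  | _, 0 => []
  | p, m + 1 => act p :: stays (p + 1) m

def macts : ℕ → List (Action α)
  | 0 => []
  | m + 1 => act 0 :: act 0 :: macts m

lemma length_stays (p m : ℕ) : (stays (α := α) p m).length = m := by
  induction m generalizing p with
  | zero => rfl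
  | succ n ih => simp [stays, ih]

lemma length_macts (m : ℕ) : (macts (α := α) m).length = 2 * m := by
  induction m with
  | zero => rfl
  | succ n ih => simp [macts, ih]; ring

lemma doPaid_nil (L : List α) : doPaid L [] = L := rfl

lemma stepCost_act (c : ℕ) (L : List α) (r : α) (t : ℕ) :
    stepCost c L r (act t) = L.idxOf r + c := by
  simp [stepCost, act, doPaid]

lemma stepList_act (L : List α) (r : α) (t : ℕ) :
    stepList L r (act t) = freeMove L r t := by
  simp [stepList, act, doPaid]

lemma freeMove_stay {x : α} (P S : List α) (hx : x ∉ P) :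
    freeMove (P ++ x :: S) x P.length = P ++ x :: S := by
  rw [freeMove, aux_index P S hx, aux_erase P S hx, min_self, insertIdx_append_length]

lemma freeMove_front (L : List α) (x : α) : freeMove L x 0 = x :: L.erase x := by
  rw [freeMove]
  simp [List.insertIdx]

lemma serveCost_append (c : ℕ) (σ₁ : List α) : ∀ (L : List α) (σ₂ : List α)
    (a₁ a₂ : List (Action α)), a₁.length = σ₁.length →
    serveCost c L (σ₁ ++ σ₂) (a₁ ++ a₂) =
      serveCost c L σ₁ a₁ + serveCost c (serveList L σ₁ a₁) σ₂ a₂ := by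
  induction σ₁ with
  | nil =>
    intro L σ₂ a₁ a₂ h
    have : a₁ = [] := List.length_eq_zero_iff.1 (by simpa using h)
    subst this
    simp [serveCost, serveList]
  | cons r σ ih =>
    intro L σ₂ a₁ a₂ h
    cases a₁ with
    | nil => simp at h
    | cons a as =>
      simp only [List.cons_append, List.append_eq, serveCost, serveList,
        ih _ _ as a₂ (by simpa using h), Nat.add_assoc]

lemma serveList_append (σ₁ : List α) : ∀ (L : List α) (σ₂ : List α)
    (a₁ a₂ : List (Action α)), a₁.length = σ₁.length →
    serveList L (σ₁ ++ σ₂) (a₁ ++ a₂) = serveList (serveList L σ₁ a₁) σ₂ a₂ := by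
  induction σ₁ with
  | nil =>
    intro L σ₂ a₁ a₂ h
    have : a₁ = [] := List.length_eq_zero_iff.1 (by simpa using h)
    subst this
    simp [serveList]
  | cons r σ ih =>
    intro L σ₂ a₁ a₂ h
    cases a₁ with
    | nil => simp at h
    | cons a as =>
      simp only [List.cons_append, List.append_eq, serveList, ih _ _ as a₂ (by simpa using h)]

lemma opt_stay_pass (S : List α) : ∀ (P : List α), (P ++ S).Nodup →
    serveCost 1 (P ++ S) S (stays P.length S.length) = S.length * P.length + tri S.length ∧
    serveList (P ++ S) S (stays P.length S.length) = P ++ S := by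
  induction S with
  | nil => intro P _; simp [serveCost, serveList, stays, tri]
  | cons x S ih =>
    intro P hnd
    have hnd1 : (x :: (P ++ S)).Nodup := (List.perm_middle.nodup_iff).1 hnd
    have hxPS : x ∉ P ++ S := (List.nodup_cons.1 hnd1).1
    have hxP : x ∉ P := fun h => hxPS (List.mem_append.2 (Or.inl h))
    have hnd' : ((P ++ [x]) ++ S).Nodup := by rw [← List.append_cons]; exact hnd
    obtain ⟨hc, hl⟩ := ih (P ++ [x]) hnd'
    have hidx : (P ++ x :: S).idxOf x = P.length := aux_index P S hxP
    have hlen : (P ++ [x]).length = P.length + 1 := by simp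
    rw [hlen] at hc hl
    constructor
    · show stepCost 1 (P ++ x :: S) x (act P.length) + _ = _
      rw [stepCost_act, hidx, stepList_act, freeMove_stay P S hxP,
        List.append_cons, hc]
      simp [tri]
      ring
    · show serveList (stepList (P ++ x :: S) x (act P.length)) S _ = _
      rw [stepList_act, freeMove_stay P S hxP, List.append_cons, hl, ← List.append_cons]

lemma opt_move_pass (S : List α) : ∀ (P : List α), (P ++ S).Nodup →
    serveCost 1 (P ++ S) (dups S) (macts S.length) =
      S.length * P.length + tri S.length + S.length ∧
    serveList (P ++ S) (dups S) (macts S.length) = S.reverse ++ P := by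
  induction S with
  | nil => intro P _; simp [serveCost, serveList, macts, dups, tri]
  | cons x S ih =>
    intro P hnd
    have hnd1 : (x :: (P ++ S)).Nodup := (List.perm_middle.nodup_iff).1 hnd
    have hxPS : x ∉ P ++ S := (List.nodup_cons.1 hnd1).1
    have hxP : x ∉ P := fun h => hxPS (List.mem_append.2 (Or.inl h))
    obtain ⟨hc, hl⟩ := ih (x :: P) hnd1
    have hidx : (P ++ x :: S).idxOf x = P.length := aux_index P S hxP
    have her : (P ++ x :: S).erase x = P ++ S := aux_erase P S hxP
    have step1 : stepList (P ++ x :: S) x (act 0) = (x :: P) ++ S := by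
      rw [stepList_act, freeMove_front, her]; rfl
    have step2 : stepList ((x :: P) ++ S) x (act 0) = (x :: P) ++ S := by
      rw [stepList_act, freeMove_front,
        show ((x :: P) ++ S) = x :: (P ++ S) from rfl, List.erase_cons_head]
    constructor
    · show stepCost 1 (P ++ x :: S) x (act 0) +
        (stepCost 1 _ x (act 0) + _) = _
      rw [stepCost_act, hidx]
      rw [show (stepList (P ++ x :: S) x (act 0)) = (x :: P) ++ S from step1]
      rw [stepCost_act]
      rw [show ((x :: P) ++ S).idxOf x = 0 from List.idxOf_cons_self]
      rw [show (stepList ((x :: P) ++ S) x (act 0)) = (x :: P) ++ S from step2, hc]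
      simp [tri]
      ring
    · show serveList (stepList (P ++ x :: S) x (act 0)) (x :: dups S) _ = _
      rw [step1]
      show serveList (stepList ((x :: P) ++ S) x (act 0)) (dups S) _ = _
      rw [step2, hl]
      simp


def roundActs (l : ℕ) : List (Action ℕ) :=
  stays 0 l ++ (macts l ++ (stays 0 l ++ macts l))

def optRoundCost (l : ℕ) : ℕ := 4 * tri l + 2 * l

lemma length_roundSeq (l : ℕ) : (roundSeq l).length = 6 * l := by
  simp [roundSeq, length_dups]
  omega

lemma length_roundActs (l : ℕ) : (roundActs l).length = 6 * l := by
  simp [roundActs, length_stays, length_macts]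
  omega

lemma opt_round (l : ℕ) :
    serveCost 1 (List.range l) (roundSeq l) (roundActs l) = optRoundCost l ∧
    serveList (List.range l) (roundSeq l) (roundActs l) = List.range l := by
  set Ls := List.range l with hLs
  have hnd : Ls.Nodup := List.nodup_range (n := l)
  have hndr : Ls.reverse.Nodup := by simpa using hnd
  have hlen : Ls.length = l := List.length_range (n := l)
  have hlenr : Ls.reverse.length = l := by simp [hlen]
  obtain ⟨c1, l1⟩ := opt_stay_pass Ls [] (by simpa using hnd)
  obtain ⟨c2, l2⟩ := opt_move_pass Ls [] (by simpa using hnd)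
  obtain ⟨c3, l3⟩ := opt_stay_pass Ls.reverse [] (by simpa using hndr)
  obtain ⟨c4, l4⟩ := opt_move_pass Ls.reverse [] (by simpa using hndr)
  simp only [List.nil_append, List.append_nil, List.length_nil, List.reverse_reverse]
    at c1 l1 c2 l2 c3 l3 c4 l4
  rw [hlen] at c1 l1 c2 l2
  rw [hlenr] at c3 l3 c4 l4
  have hlen1 : ∀ m : ℕ, (stays (α := ℕ) 0 m).length = m := fun m => length_stays 0 m
  constructor
  · rw [roundSeq, roundActs,
      serveCost_append 1 Ls Ls _ _ _ (by rw [hlen1, hlen]), c1, l1,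
      serveCost_append 1 (dups Ls) _ _ _ _ (by rw [length_macts, length_dups, hlen]), c2, l2,
      serveCost_append 1 Ls.reverse _ _ _ _ (by rw [hlen1, hlenr]), c3, l3, c4]
    simp [optRoundCost]
    ring
  · rw [roundSeq, roundActs,
      serveList_append Ls _ _ _ _ (by rw [hlen1, hlen]), l1,
      serveList_append (dups Ls) _ _ _ _ (by rw [length_macts, length_dups, hlen]), l2,
      serveList_append Ls.reverse _ _ _ _ (by rw [hlen1, hlenr]), l3, l4]

lemma opt_reps (l k : ℕ) :
    serveCost 1 (List.range l) (reps k (roundSeq l)) (reps k (roundActs l)) =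
      k * optRoundCost l ∧
    serveList (List.range l) (reps k (roundSeq l)) (reps k (roundActs l)) = List.range l := by
  induction k with
  | zero => constructor <;> simp [reps, serveCost, serveList]
  | succ n ih =>
    obtain ⟨hc, hl⟩ := opt_round l
    have hlen : (roundActs l).length = (roundSeq l).length := by
      rw [length_roundActs, length_roundSeq]
    constructor
    · rw [reps, reps, serveCost_append 1 _ _ _ _ _ hlen, hc, hl, ih.1]
      ring
    · rw [reps, reps, serveList_append _ _ _ _ _ hlen, hl, ih.2]

lemma serveCost_ge (σ : List α) : ∀ (L : List α) (as : List (Action α)),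
    as.length = σ.length → σ.length ≤ serveCost 1 L σ as := by
  induction σ with
  | nil => intro L as _; simp
  | cons r σ ih =>
    intro L as h
    cases as with
    | nil => simp at h
    | cons a as =>
      have h1 : 1 ≤ stepCost 1 L r a := by
        simp only [stepCost]
        omega
      have := ih (stepList L r a) as (by simpa using h)
      show (σ.length + 1) ≤ stepCost 1 L r a + serveCost 1 (stepList L r a) σ as
      omega

lemma two_tri (l : ℕ) : 2 * tri l = l * l + l := by
  induction l with
  | zero => rfl
  | succ n ih =>
    have : 2 * tri (n + 1) = 2 * tri n + 2 * n + 2 := by simp [tri]; ring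
    rw [this, ih]
    ring

lemma key1 (l : ℕ) : 4 * roundCost l + 18 * l = 7 * optRoundCost l := by
  have h := two_tri l
  rw [roundCost, optRoundCost]
  ring_nf
  ring_nf at h
  linarith

lemma key2 (l : ℕ) : 4 * optRoundCost l = (8 * l + 16) * l := by
  have h := two_tri l
  rw [optRoundCost]
  ring_nf
  ring_nf at h
  linarith

lemma mtfo_eq (l k : ℕ) : mtfoCost 1 (List.range l) (reps k (roundSeq l)) = k * roundCost l :=
  mtfo_reps l k _ (fun _ _ => rfl)

lemma mtfe_eq (l k : ℕ) : mtfeCost 1 (List.range l) (reps k (roundSeq l)) = k * roundCost l :=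
  mtfe_reps l k _ (fun _ _ => rfl)

lemma mem_roundSeq {l r : ℕ} (h : r ∈ roundSeq l) : r ∈ List.range l := by
  simp only [roundSeq, List.mem_append, mem_dups, List.mem_reverse] at h
  tauto

lemma optCost_le (l k : ℕ) :
    optCost 1 (List.range l) (reps k (roundSeq l)) ≤ k * optRoundCost l :=
  Nat.sInf_le ⟨reps k (roundActs l),
    by rw [length_reps, length_reps, length_roundActs, length_roundSeq],
    (opt_reps l k).1⟩

lemma optCost_ge (l k : ℕ) :
    k * (6 * l) ≤ optCost 1 (List.range l) (reps k (roundSeq l)) := by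
  apply le_csInf
  · exact ⟨k * optRoundCost l, reps k (roundActs l),
      by rw [length_reps, length_reps, length_roundActs, length_roundSeq],
      (opt_reps l k).1⟩
  · rintro n ⟨as, hlen, rfl⟩
    have := serveCost_ge (reps k (roundSeq l)) (List.range l) as hlen
    rwa [length_reps, length_roundSeq] at this

end ListUpdate

open ListUpdate

/-- For every `ε > 0` and every `M` there are an initial list and a request sequence
`σ` with `OPT(σ) ≥ M` and `min(MTFO(σ), MTFE(σ)) ≥ (1.75 − ε)·OPT(σ)` (full cost
model); consequently, the algorithm serving each input by the cheaper of MTFO and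
MTFE has competitive ratio at least `1.75`. -/
theorem best_of_two_lower_bound :
    (∀ ε : ℝ, 0 < ε → ∀ M : ℕ, ∃ (L σ : List ℕ), L.Nodup ∧ (∀ r ∈ σ, r ∈ L) ∧
      M ≤ optCost 1 L σ ∧
      (1.75 - ε) * (optCost 1 L σ : ℝ) ≤
        (min (mtfoCost 1 L σ) (mtfeCost 1 L σ) : ℝ)) ∧
    (∀ c : ℝ, c < 1.75 → ∀ b : ℝ, ∃ (L σ : List ℕ), L.Nodup ∧ (∀ r ∈ σ, r ∈ L) ∧
      ¬((min (mtfoCost 1 L σ) (mtfeCost 1 L σ) : ℝ) ≤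
          c * (optCost 1 L σ : ℝ) + b)) := by
  constructor
  · intro ε hε M
    obtain ⟨n, hn⟩ := exists_nat_ge (18 / ε)
    set l : ℕ := n + 1 with hldef
    set k : ℕ := M with hkdef
    have hεl : (18 : ℝ) ≤ ε * (8 * (l : ℝ) + 16) := by
      have h1 : (18 : ℝ) ≤ ε * n := by
        rw [div_le_iff₀ hε] at hn; linarith
      have h2 : (n : ℝ) ≤ 8 * (l : ℝ) + 16 := by
        rw [hldef]; push_cast; linarith
      calc (18 : ℝ) ≤ ε * n := h1
        _ ≤ ε * (8 * (l : ℝ) + 16) := by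
            exact mul_le_mul_of_nonneg_left h2 hε.le
    refine ⟨List.range l, reps k (roundSeq l), List.nodup_range (n := l),
      fun r hr => mem_roundSeq (mem_reps hr), ?_, ?_⟩
    · have h6 : k * (6 * l) ≤ optCost 1 (List.range l) (reps k (roundSeq l)) :=
        optCost_ge l k
      have : M ≤ k * (6 * l) := by
        rw [hkdef]
        calc M = M * 1 := (mul_one M).symm
          _ ≤ M * (6 * l) := Nat.mul_le_mul_left M (by omega)
      omega
    · set O : ℕ := optCost 1 (List.range l) (reps k (roundSeq l)) with hO
      rw [mtfo_eq, mtfe_eq, min_self]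
      have e1n : 4 * (k * roundCost l) + 18 * (k * l) = 7 * (k * optRoundCost l) := by
        calc 4 * (k * roundCost l) + 18 * (k * l)
            = k * (4 * roundCost l + 18 * l) := by ring
          _ = k * (7 * optRoundCost l) := by rw [key1]
          _ = 7 * (k * optRoundCost l) := by ring
      have e2n : 4 * (k * optRoundCost l) = k * ((8 * l + 16) * l) := by
        calc 4 * (k * optRoundCost l) = k * (4 * optRoundCost l) := by ring
          _ = k * ((8 * l + 16) * l) := by rw [key2]
      have e1 : 4 * ((k * roundCost l : ℕ) : ℝ) + 18 * ((k : ℝ) * l)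
          = 7 * ((k * optRoundCost l : ℕ) : ℝ) := by exact_mod_cast e1n
      have e2 : 4 * ((k * optRoundCost l : ℕ) : ℝ) = (k : ℝ) * ((8 * l + 16) * l) := by
        exact_mod_cast e2n
      have fO : (O : ℝ) ≤ ((k * optRoundCost l : ℕ) : ℝ) := by
        exact_mod_cast optCost_le l k
      by_cases hle : (1.75 : ℝ) - ε ≤ 0
      · calc (1.75 - ε) * (O : ℝ) ≤ 0 := mul_nonpos_of_nonpos_of_nonneg hle (Nat.cast_nonneg _)
          _ ≤ _ := Nat.cast_nonneg _
      · push_neg at hle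
        have hkl : (0 : ℝ) ≤ (k : ℝ) * l := by positivity
        have h3 : 18 * ((k : ℝ) * l) ≤ ε * (8 * (l : ℝ) + 16) * ((k : ℝ) * l) :=
          mul_le_mul_of_nonneg_right hεl hkl
        have h4 : ε * (8 * (l : ℝ) + 16) * ((k : ℝ) * l)
            = ε * (4 * ((k * optRoundCost l : ℕ) : ℝ)) := by rw [e2]; ring
        have step : (1.75 - ε) * (O : ℝ) ≤ (1.75 - ε) * ((k * optRoundCost l : ℕ) : ℝ) :=
          mul_le_mul_of_nonneg_left fO hle.le
        calc (1.75 - ε) * (O : ℝ) ≤ (1.75 - ε) * ((k * optRoundCost l : ℕ) : ℝ) := step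
          _ ≤ ((k * roundCost l : ℕ) : ℝ) := by linarith
  · intro c hc b
    set c' : ℝ := max c 0 with hc'def
    have hc'0 : 0 ≤ c' := le_max_right c 0
    have hc'lt : c' < 1.75 := max_lt hc (by norm_num)
    have hδ : (0 : ℝ) < 1.75 - c' := by linarith
    obtain ⟨n, hn⟩ := exists_nat_ge (36 / (1.75 - c'))
    set l : ℕ := n + 1 with hldef
    obtain ⟨k, hk⟩ := exists_nat_gt b
    have hδl : (36 : ℝ) ≤ (1.75 - c') * (8 * (l : ℝ) + 16) := by
      have h1 : (36 : ℝ) ≤ (1.75 - c') * n := by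
        rw [div_le_iff₀ hδ] at hn; linarith
      have h2 : (n : ℝ) ≤ 8 * (l : ℝ) + 16 := by
        rw [hldef]; push_cast; linarith
      calc (36 : ℝ) ≤ (1.75 - c') * n := h1
        _ ≤ _ := mul_le_mul_of_nonneg_left h2 hδ.le
    refine ⟨List.range l, reps k (roundSeq l), List.nodup_range (n := l),
      fun r hr => mem_roundSeq (mem_reps hr), ?_⟩
    rw [mtfo_eq, mtfe_eq, min_self]
    set O : ℕ := optCost 1 (List.range l) (reps k (roundSeq l)) with hO
    have e1n : 4 * (k * roundCost l) + 18 * (k * l) = 7 * (k * optRoundCost l) := by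
      calc 4 * (k * roundCost l) + 18 * (k * l)
          = k * (4 * roundCost l + 18 * l) := by ring
        _ = k * (7 * optRoundCost l) := by rw [key1]
        _ = 7 * (k * optRoundCost l) := by ring
    have e2n : 4 * (k * optRoundCost l) = k * ((8 * l + 16) * l) := by
      calc 4 * (k * optRoundCost l) = k * (4 * optRoundCost l) := by ring
        _ = k * ((8 * l + 16) * l) := by rw [key2]
    have e1 : 4 * ((k * roundCost l : ℕ) : ℝ) + 18 * ((k : ℝ) * l)
        = 7 * ((k * optRoundCost l : ℕ) : ℝ) := by exact_mod_cast e1n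
    have e2 : 4 * ((k * optRoundCost l : ℕ) : ℝ) = (k : ℝ) * ((8 * l + 16) * l) := by
      exact_mod_cast e2n
    have fO : (O : ℝ) ≤ ((k * optRoundCost l : ℕ) : ℝ) := by
      exact_mod_cast optCost_le l k
    have hkl : (0 : ℝ) ≤ (k : ℝ) * l := by positivity
    have h3 : 36 * ((k : ℝ) * l) ≤ (1.75 - c') * (8 * (l : ℝ) + 16) * ((k : ℝ) * l) :=
      mul_le_mul_of_nonneg_right hδl hkl
    have h4 : (1.75 - c') * (8 * (l : ℝ) + 16) * ((k : ℝ) * l)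
        = (1.75 - c') * (4 * ((k * optRoundCost l : ℕ) : ℝ)) := by rw [e2]; ring
    have f2 : c * (O : ℝ) ≤ c' * (O : ℝ) :=
      mul_le_mul_of_nonneg_right (le_max_left c 0) (Nat.cast_nonneg _)
    have f3 : c' * (O : ℝ) ≤ c' * ((k * optRoundCost l : ℕ) : ℝ) :=
      mul_le_mul_of_nonneg_left fO hc'0
    have h5 : (k : ℝ) * 1 ≤ (k : ℝ) * l := by
      apply mul_le_mul_of_nonneg_left _ (Nat.cast_nonneg k)
      rw [hldef]; push_cast; linarith
    push_neg
    have hc'KO : (0:ℝ) ≤ ((k * optRoundCost l : ℕ) : ℝ) := Nat.cast_nonneg _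
    linarith
end

section
/- On a list of two items, under the partial cost model, there is a constant c such that for every initial list order, every initial bit assignment, and every request sequence σ, the MTF2 algorithm A satisfies A(σ) ≤ 2.5·OPT(σ) + c. -/
namespace ListUpdate

variable {α : Type} [DecidableEq α]

section MyHelpers
set_option linter.unusedSectionVars false
set_option linter.unusedVariables false

variable {x y : α}

/-- Predicate: `L` is one of the two orders of `{x,y}`. -/
def TwoP (x y : α) (L : List α) : Prop := L = [x, y] ∨ L = [y, x]

lemma adjSwap_two {L : List α} (h : TwoP x y L) (i : ℕ) : TwoP x y (adjSwap L i) := by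
  rcases h with h | h <;> subst h <;>
    match i with
    | 0 => simp [adjSwap, TwoP]
    | 1 => simp [adjSwap, TwoP]
    | (n+2) => simp [adjSwap, TwoP]

lemma doPaid_two {L : List α} (h : TwoP x y L) (ps : List ℕ) : TwoP x y (doPaid L ps) := by
  induction ps generalizing L with
  | nil => exact h
  | cons p ps ih => exact ih (adjSwap_two h p)

lemma freeMove_two (hxy : x ≠ y) {L : List α} (h : TwoP x y L) (r : α)
    (hr : r = x ∨ r = y) (j : ℕ) : TwoP x y (freeMove L r j) := by
  rcases h with h | h <;> rcases hr with hr | hr <;> subst h hr <;>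
    simp [freeMove, TwoP, List.erase_cons, hxy, hxy.symm] <;>
    (have h01 : min j 1 = 0 ∨ min j 1 = 1 := by omega
     rcases h01 with h0 | h0 <;> simp [h0, List.insertIdx])

lemma stepList_two (hxy : x ≠ y) {L : List α} (h : TwoP x y L) (r : α)
    (hr : r = x ∨ r = y) (a : Action α) : TwoP x y (stepList L r a) :=
  freeMove_two hxy (doPaid_two h a.paid) r hr a.target

lemma idx_self (s : α) (l : List α) : List.idxOf s (s :: l) = 0 :=
  List.idxOf_cons_self

lemma idx_back {r s : α} (hrs : s ≠ r) : List.idxOf r [s, r] = 1 := by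
  rw [List.idxOf_cons_ne _ hrs, List.idxOf_cons_self]

lemma stepCost_back {r s : α} (hrs : s ≠ r) (a : Action α) :
    1 ≤ stepCost 0 [s, r] r a := by
  unfold stepCost
  rcases hp : a.paid with _ | ⟨p, ps⟩
  · simp [doPaid, idx_back hrs]
  · simp only [List.length_cons]
    omega

lemma stepCost_flip {r s : α} (hrs : r ≠ s) (a : Action α)
    (h : stepList [r, s] r a = [s, r]) : 2 ≤ stepCost 0 [r, s] r a := by
  have hM : TwoP r s (doPaid [r, s] a.paid) := doPaid_two (Or.inl rfl) a.paid
  rcases hM with hM | hM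
  · exfalso
    unfold stepList at h
    rw [hM] at h
    simp [freeMove, List.erase_cons, idx_self] at h
    exact hrs h.1
  · have hp : a.paid ≠ [] := by
      intro h0
      rw [h0] at hM
      simp [doPaid] at hM
      exact hrs hM.1
    unfold stepCost
    rw [hM, idx_back hrs.symm]
    have : 1 ≤ a.paid.length := List.length_pos_iff.mpr hp
    omega

/-- The potential function for the MTF2 vs OPT comparison on two items. -/
def phi (bits : α → Bool) (LA LO : List α) : ℕ :=
  match LA with
  | [a, b] => if LA = LO then cond (bits b) 1 0
              else cond (bits a) (cond (bits b) 3 5) (cond (bits b) 2 4)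
  | _ => 0

lemma phi_le (bits : α → Bool) (LA LO : List α) : phi bits LA LO ≤ 5 := by
  unfold phi
  split
  · rename_i a b
    split <;> cases bits a <;> cases bits b <;> simp
  · omega

lemma step_ineq (hxy : x ≠ y) (bits : α → Bool) {LA LO : List α} (r : α)
    (hLA : TwoP x y LA) (hLO : TwoP x y LO) (hr : r = x ∨ r = y) (a : Action α) :
    2 * LA.idxOf r +
      phi (Function.update bits r (!bits r)) (if !bits r then LA else r :: LA.erase r)
        (stepList LO r a) ≤ 5 * stepCost 0 LO r a + phi bits LA LO := by
  have hLO' := stepList_two hxy hLO r hr a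
  rcases hr with hr | hr <;> rw [hr] at hLO' ⊢ <;> rcases hLO with rfl | rfl <;>
    rcases hLO' with h | h <;> rw [h] <;>
    [skip; (have hc := stepCost_flip hxy a h);
     (have hc := stepCost_back hxy.symm a); (have hc := stepCost_back hxy.symm a);
     (have hc := stepCost_back hxy a); (have hc := stepCost_back hxy a);
     (have hc := stepCost_flip hxy.symm a h); skip] <;>
    rcases hLA with rfl | rfl <;> cases hbx : bits x <;> cases hby : bits y <;>
    (try simp [phi, Function.update_apply, hbx, hby, hxy, hxy.symm, List.erase_cons,
      idx_self, idx_back hxy, idx_back hxy.symm, Ne.symm hxy]) <;> omega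

lemma main_bound_s18 (hxy : x ≠ y) :
    ∀ σ : List α, (∀ r ∈ σ, r = x ∨ r = y) →
    ∀ (bits : α → Bool) (LA LO : List α) (as : List (Action α)),
      TwoP x y LA → TwoP x y LO → as.length = σ.length →
      2 * mtf2Cost 0 bits LA σ ≤ 5 * serveCost 0 LO σ as + phi bits LA LO := by
  intro σ
  induction σ with
  | nil => intro _ bits LA LO as _ _ _; simp [mtf2Cost, serveCost]
  | cons r σ' ih =>
    intro hσ bits LA LO as hLA hLO hlen
    match as with
    | [] => simp at hlen
    | a :: as' =>
      have hr : r = x ∨ r = y := hσ r (List.mem_cons_self)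
      have hσ' : ∀ s ∈ σ', s = x ∨ s = y := fun s hs => hσ s (List.mem_cons_of_mem r hs)
      have hLA' : TwoP x y (if !bits r then LA else r :: LA.erase r) := by
        cases hb : bits r
        · simpa using hLA
        · rcases hLA with rfl | rfl <;> rcases hr with rfl | rfl <;>
            simp [TwoP, List.erase_cons, hxy, hxy.symm]
      have hLO' : TwoP x y (stepList LO r a) := stepList_two hxy hLO r hr a
      have hIH := ih hσ' (Function.update bits r (!bits r))
        (if !bits r then LA else r :: LA.erase r) (stepList LO r a) as' hLA' hLO'
        (by simpa using hlen)
      have hstep := step_ineq hxy bits r hLA hLO hr a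
      show 2 * ((LA.idxOf r + 0) + mtf2Cost 0 _ _ σ') ≤
        5 * (stepCost 0 LO r a + serveCost 0 (stepList LO r a) σ' as') + phi bits LA LO
      omega

end MyHelpers

end ListUpdate

open ListUpdate

/-- On a list of two items, under the partial cost model, there is a constant `c`
such that for every initial list order, every initial bit assignment and every
request sequence `σ`, the MTF2 algorithm satisfies `MTF2(σ) ≤ 2.5·OPT(σ) + c`. -/
theorem mtf2_upper_bound_two_items :
    ∃ c : ℝ, ∀ (α : Type) (_ : DecidableEq α) (x y : α), x ≠ y →
      ∀ L : List α, (L = [x, y] ∨ L = [y, x]) →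
        ∀ (bits : α → Bool) (σ : List α), (∀ r ∈ σ, r = x ∨ r = y) →
          (mtf2Cost 0 bits L σ : ℝ) ≤ 2.5 * (optCost 0 L σ : ℝ) + c := by
  refine ⟨5, ?_⟩
  intro α _ x y hxy L hL bits σ hσ
  have hL' : TwoP x y L := hL
  have hmem : optCost 0 L σ ∈
      {n | ∃ as : List (Action α), as.length = σ.length ∧ serveCost 0 L σ as = n} := by
    apply Nat.sInf_mem
    exact ⟨serveCost 0 L σ (List.replicate σ.length ⟨[], 0⟩),
      ⟨List.replicate σ.length ⟨[], 0⟩, by simp, rfl⟩⟩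
  obtain ⟨as, hlen, hserve⟩ := hmem
  have hmain := main_bound_s18 hxy σ hσ bits L L as hL' hL' hlen
  have hphi := phi_le bits L L
  rw [hserve] at hmain
  have h2 : 2 * mtf2Cost 0 bits L σ ≤ 5 * optCost 0 L σ + 5 := by omega
  have h3 := (Nat.cast_le (α := ℝ)).mpr h2
  push_cast at h3
  norm_num
  linarith
end
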